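/- Let d ≥ 1 and let f : ℝ^d → ℝ be three times continuously differentiable with |∂³_{ijk}f(x)| ≤ B₁ for all indices i, j, k and all x; set c₂″ = B₁d⁴/3. For δ > 0 define the balanced smoothed gradient ∇f_δ(x) = (1/(2δ))·E_u[(f(x + δu) − f(x − δu))·(d+1)u/(1+‖u‖²)], where u is distributed with the unit-scale truncated Cauchy density h. Then for every x ∈ ℝ^d, ‖∇f_δ(x)‖ ≤ c₁₁‖∇f(x)‖ + d·c₂″·δ², and consequently ‖∇f_δ(x)‖² ≤ 2c₁₁²‖∇f(x)‖² + 2d²δ⁴c₂″², where c₁₁ = 2Γ((d+1)/2)/(√π·Γ(d/2)·c₁). -/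

import Mathlib

open MeasureTheory Real Filter Topology ProbabilityTheory

/-- The truncated (to the `δ`-sphere) Cauchy density on `ℝ^d`, with normalizing
constant `c₁`: `h_δ(u) = Γ((d+1)/2)/(π^((d+1)/2) c₁ δ^d) · (1+‖u‖²/δ²)^(-(d+1)/2)`
for `‖u‖ ≤ δ` and `0` otherwise. -/
noncomputable def truncCauchy (d : ℕ) (c₁ δ : ℝ) (u : EuclideanSpace ℝ (Fin d)) : ℝ :=
  if ‖u‖ ≤ δ then
    Real.Gamma (((d : ℝ) + 1) / 2) / (Real.pi ^ (((d : ℝ) + 1) / 2) * c₁ * δ ^ d) *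
      (1 + ‖u‖ ^ 2 / δ ^ 2) ^ (-(((d : ℝ) + 1) / 2))
  else 0

/-- The unit-scale truncated Cauchy probability measure on `ℝ^d`. -/
noncomputable def truncCauchyMeasure (d : ℕ) (c₁ : ℝ) : Measure (EuclideanSpace ℝ (Fin d)) :=
  volume.withDensity fun v => ENNReal.ofReal (truncCauchy d c₁ 1 v)

section Aux

variable {E : Type*} [NormedAddCommGroup E] [NormedSpace ℝ E]

private lemma line_deriv (f : E → ℝ) (hf : ContDiff ℝ 3 f) (n : ℕ) (hn : n < 3) (x v : E)
    (t : ℝ) :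
    HasDerivAt (fun s : ℝ => iteratedFDeriv ℝ n f (x + s • v) (fun _ => v))
      (iteratedFDeriv ℝ (n+1) f (x + t • v) (fun _ => v)) t := by
  have hc : HasDerivAt (fun s : ℝ => x + s • v) v t := by
    simpa using ((hasDerivAt_id t).smul_const v).const_add x
  have hΦ : DifferentiableAt ℝ (iteratedFDeriv ℝ n f) (x + t • v) :=
    (hf.differentiable_iteratedFDeriv (by exact_mod_cast hn)).differentiableAt
  set A := ContinuousMultilinearMap.apply ℝ (fun _ : Fin n => E) ℝ (fun _ => v)
  have h1 : HasDerivAt (fun s : ℝ => iteratedFDeriv ℝ n f (x + s • v))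
      (fderiv ℝ (iteratedFDeriv ℝ n f) (x + t • v) v) t :=
    hΦ.hasFDerivAt.comp_hasDerivAt t hc
  have h2 := (A.hasFDerivAt.comp_hasDerivAt t h1 :)
  have h3 : A (fderiv ℝ (iteratedFDeriv ℝ n f) (x + t • v) v)
      = iteratedFDeriv ℝ (n+1) f (x + t • v) (fun _ => v) := by
    rw [iteratedFDeriv_succ_apply_left]; rfl
  rw [h3] at h2
  exact h2

private lemma line_cont (f : E → ℝ) (hf : ContDiff ℝ 3 f) (n : ℕ) (hn : n ≤ 3) (x v : E) :
    Continuous (fun s : ℝ => iteratedFDeriv ℝ n f (x + s • v) (fun _ => v)) := by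
  exact (ContinuousMultilinearMap.apply ℝ (fun _ : Fin n => E) ℝ (fun _ => v)).continuous.comp
    ((hf.continuous_iteratedFDeriv (by exact_mod_cast hn)).comp (by continuity))

/-- Third-order Taylor bound for a symmetric difference. -/
private lemma symm_taylor (f : E → ℝ) (hf : ContDiff ℝ 3 f) (x v : E) (A : ℝ)
    (hA : ∀ y : E, |iteratedFDeriv ℝ 3 f y (fun _ => v)| ≤ A) :
    |f (x + v) - f (x - v) - 2 * (fderiv ℝ f x v)| ≤ A / 3 := by
  set F : ℕ → ℝ → ℝ := fun n t => iteratedFDeriv ℝ n f (x + t • v) (fun _ => v) with hFdef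
  have hF : ∀ n < 3, ∀ t : ℝ, HasDerivAt (F n) (F (n+1) t) t :=
    fun n hn t => line_deriv f hf n hn x v t
  have hFc : ∀ n ≤ 3, Continuous (F n) := fun n hn => line_cont f hf n hn x v
  set G₀ : ℝ → ℝ := fun t => F 0 t - F 0 (-t) - 2*t*(F 1 0) with hG0def
  set G₁ : ℝ → ℝ := fun t => F 1 t + F 1 (-t) - 2*(F 1 0) with hG1def
  set G₂ : ℝ → ℝ := fun t => F 2 t - F 2 (-t) with hG2def
  set G₃ : ℝ → ℝ := fun t => F 3 t + F 3 (-t) with hG3def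
  have hneg : ∀ (n) (_ : n < 3) (t : ℝ),
      HasDerivAt (fun s : ℝ => F n (-s)) (-(F (n+1) (-t))) t := by
    intro n hn t
    have := (hF n hn (-t)).comp t (hasDerivAt_neg t)
    simpa [mul_comm, Function.comp_def] using this
  have hG0 : ∀ t : ℝ, HasDerivAt G₀ (G₁ t) t := by
    intro t
    simp only [hG0def, hG1def]
    have h3 : HasDerivAt (fun s : ℝ => 2*s*(F 1 0)) (2*(F 1 0)) t := by
      have := (hasDerivAt_mul_const (F 1 0)).const_mul (c := 2) (x := t)
      simpa [mul_assoc] using this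
    have h := ((hF 0 (by norm_num) t).sub (hneg 0 (by norm_num) t)).sub h3
    convert h using 1
    · rfl
    · rfl
    · rfl
    norm_num
  have hG1 : ∀ t : ℝ, HasDerivAt G₁ (G₂ t) t := by
    intro t
    simp only [hG1def, hG2def]
    have h := ((hF 1 (by norm_num) t).add (hneg 1 (by norm_num) t)).sub
      (hasDerivAt_const t (2*(F 1 0)))
    convert h using 1
    · rfl
    · rfl
    · rfl
    norm_num [sub_eq_add_neg]
  have hG2 : ∀ t : ℝ, HasDerivAt G₂ (G₃ t) t := by
    intro t
    simp only [hG2def, hG3def]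
    have h := (hF 2 (by norm_num) t).sub (hneg 2 (by norm_num) t)
    convert h using 1
    · rfl
    · rfl
    · rfl
    norm_num [sub_eq_add_neg]
  have hA0 : 0 ≤ A := (abs_nonneg _).trans (hA x)
  have hG3b : ∀ t : ℝ, |G₃ t| ≤ 2*A :=
    fun t => (abs_add_le _ _).trans (by
      have h1 := hA (x + t • v); have h2 := hA (x + (-t) • v); simp only [hFdef]; linarith)
  have hG1c : Continuous G₁ := by
    exact ((hFc 1 (by norm_num)).add ((hFc 1 (by norm_num)).comp continuous_neg)).sub
      continuous_const
  have hG2c : Continuous G₂ := by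
    exact (hFc 2 (by norm_num)).sub ((hFc 2 (by norm_num)).comp continuous_neg)
  have hG2b : ∀ t ∈ Set.Icc (0:ℝ) 1, |G₂ t| ≤ 2*A*t := by
    intro t ht
    have hftc : ∫ s in (0:ℝ)..t, G₃ s = G₂ t - G₂ 0 :=
      intervalIntegral.integral_eq_sub_of_hasDerivAt (fun s _ => hG2 s)
        (((hFc 3 le_rfl).add ((hFc 3 le_rfl).comp continuous_neg)).intervalIntegrable 0 t)
    have h0 : G₂ 0 = 0 := by simp [hG2def]
    have hb := intervalIntegral.norm_integral_le_of_norm_le_const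
      (C := 2*A) (f := G₃) (a := 0) (b := t) (fun s _ => by simpa using hG3b s)
    rw [hftc, h0, sub_zero] at hb
    calc |G₂ t| ≤ 2*A * |t - 0| := hb
    _ = 2*A*t := by rw [sub_zero, abs_of_nonneg ht.1]
  have hG1b : ∀ t ∈ Set.Icc (0:ℝ) 1, |G₁ t| ≤ A*t^2 := by
    intro t ht
    have hftc : ∫ s in (0:ℝ)..t, G₂ s = G₁ t - G₁ 0 :=
      intervalIntegral.integral_eq_sub_of_hasDerivAt (fun s _ => hG1 s)
        (hG2c.intervalIntegrable 0 t)
    have h0 : G₁ 0 = 0 := by simp [hG1def]; ring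
    rw [h0, sub_zero] at hftc
    rw [← hftc]
    have hbound : ∀ s ∈ Set.uIoc (0:ℝ) t, ‖G₂ s‖ ≤ 2*A*s := by
      intro s hs
      rw [Set.uIoc_of_le ht.1] at hs
      exact hG2b s ⟨hs.1.le, hs.2.trans ht.2⟩
    have := intervalIntegral.norm_integral_le_abs_of_norm_le (μ := volume) (g := fun s => 2*A*s)
      ((ae_restrict_iff' measurableSet_uIoc).mpr (.of_forall hbound))
      ((continuous_const.mul continuous_id).intervalIntegrable 0 t)
    calc |∫ s in (0:ℝ)..t, G₂ s| ≤ |∫ s in (0:ℝ)..t, 2*A*s| := this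
    _ = A*t^2 := by
        rw [intervalIntegral.integral_const_mul, integral_id]
        rw [show 2*A*((t^2-0^2)/2) = A*t^2 by ring]
        exact abs_of_nonneg (mul_nonneg hA0 (sq_nonneg t))
  have hG0b : |G₀ 1| ≤ A/3 := by
    have hftc : ∫ s in (0:ℝ)..1, G₁ s = G₀ 1 - G₀ 0 :=
      intervalIntegral.integral_eq_sub_of_hasDerivAt (fun s _ => hG0 s)
        (hG1c.intervalIntegrable 0 1)
    have h0 : G₀ 0 = 0 := by simp [hG0def]
    rw [h0, sub_zero] at hftc
    rw [← hftc]
    have hbound : ∀ s ∈ Set.uIoc (0:ℝ) 1, ‖G₁ s‖ ≤ A*s^2 := by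
      intro s hs
      rw [Set.uIoc_of_le zero_le_one] at hs
      exact hG1b s ⟨hs.1.le, hs.2⟩
    have := intervalIntegral.norm_integral_le_abs_of_norm_le (μ := volume) (g := fun s => A*s^2)
      ((ae_restrict_iff' measurableSet_uIoc).mpr (.of_forall hbound))
      ((continuous_const.mul (continuous_pow 2)).intervalIntegrable 0 1)
    calc |∫ s in (0:ℝ)..1, G₁ s| ≤ |∫ s in (0:ℝ)..1, A*s^2| := this
    _ = A/3 := by
        rw [intervalIntegral.integral_const_mul, integral_pow]
        rw [abs_of_nonneg (by positivity)]
        push_cast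
        ring
  have hG01 : G₀ 1 = f (x + v) - f (x - v) - 2 * (fderiv ℝ f x v) := by
    simp only [hG0def, hFdef]
    rw [iteratedFDeriv_zero_apply, iteratedFDeriv_zero_apply, iteratedFDeriv_one_apply]
    norm_num [sub_eq_add_neg]
  rw [← hG01]
  exact hG0b

end Aux

/-- Entrywise bounds on the third derivative give a bound on the third derivative
as a trilinear form, evaluated on the diagonal. -/
private lemma third_deriv_diag_bound (d : ℕ) (f : EuclideanSpace ℝ (Fin d) → ℝ) (B₁ : ℝ)
    (h3 : ∀ (y : EuclideanSpace ℝ (Fin d)) (i j k : Fin d),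
      |iteratedFDeriv ℝ 3 f y
        ![EuclideanSpace.single i 1, EuclideanSpace.single j 1, EuclideanSpace.single k 1]| ≤ B₁)
    (y v : EuclideanSpace ℝ (Fin d)) :
    |iteratedFDeriv ℝ 3 f y (fun _ => v)| ≤ B₁ * (d:ℝ)^3 * ‖v‖^3 := by
  have hcoord : ∀ i : Fin d, |v i| ≤ ‖v‖ := by
    intro i
    have h2 : (v i)^2 ≤ ‖v‖^2 := by
      rw [EuclideanSpace.norm_eq, Real.sq_sqrt (by positivity)]
      calc (v i)^2 = ‖v i‖^2 := by rw [Real.norm_eq_abs, sq_abs]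
      _ ≤ ∑ j, ‖v j‖^2 := Finset.single_le_sum (f := fun j => ‖v j‖^2)
          (fun j _ => by positivity) (Finset.mem_univ i)
    calc |v i| = Real.sqrt ((v i)^2) := (Real.sqrt_sq_eq_abs _).symm
    _ ≤ Real.sqrt (‖v‖^2) := Real.sqrt_le_sqrt h2
    _ = ‖v‖ := Real.sqrt_sq (norm_nonneg v)
  set T := iteratedFDeriv ℝ 3 f y
  have hv : (fun _ : Fin 3 => v) = fun l : Fin 3 =>
      ∑ i : Fin d, v i • EuclideanSpace.single i (1:ℝ) := by
    funext l
    have := (EuclideanSpace.basisFun (Fin d) ℝ).sum_repr v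
    simp only [EuclideanSpace.basisFun_apply, EuclideanSpace.basisFun_repr] at this
    exact this.symm
  have hexp : T (fun _ => v) = ∑ r : Fin 3 → Fin d,
      (∏ l, v (r l)) • T (fun l => EuclideanSpace.single (r l) (1:ℝ)) := by
    rw [hv, T.map_sum]
    congr 1
    funext r
    rw [← T.map_smul_univ]
  rw [hexp]
  have hterm : ∀ r : Fin 3 → Fin d,
      |(∏ l, v (r l)) • T (fun l => EuclideanSpace.single (r l) (1:ℝ))| ≤ B₁ * ‖v‖^3 := by
    intro r
    have heq : (fun l : Fin 3 => EuclideanSpace.single (r l) (1:ℝ)) =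
        ![EuclideanSpace.single (r 0) 1, EuclideanSpace.single (r 1) 1,
          EuclideanSpace.single (r 2) 1] := by
      funext l
      fin_cases l <;> rfl
    have hB := h3 y (r 0) (r 1) (r 2)
    rw [smul_eq_mul, abs_mul]
    have hprod : |∏ l : Fin 3, v (r l)| ≤ ‖v‖^3 := by
      rw [Finset.abs_prod]
      calc ∏ l : Fin 3, |v (r l)| ≤ ∏ l : Fin 3, ‖v‖ :=
        Finset.prod_le_prod (fun _ _ => abs_nonneg _) (fun l _ => hcoord (r l))
      _ = ‖v‖^3 := by simp [Finset.prod_const]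
    have hT : |T (fun l => EuclideanSpace.single (r l) (1:ℝ))| ≤ B₁ := by rw [heq]; exact hB
    calc |∏ l : Fin 3, v (r l)| * |T (fun l => EuclideanSpace.single (r l) (1:ℝ))|
        ≤ ‖v‖^3 * B₁ := mul_le_mul hprod hT (abs_nonneg _) (by positivity)
    _ = B₁ * ‖v‖^3 := by ring
  calc |∑ r : Fin 3 → Fin d, (∏ l, v (r l)) • T (fun l => EuclideanSpace.single (r l) (1:ℝ))|
      ≤ ∑ r : Fin 3 → Fin d, |(∏ l, v (r l)) • T (fun l => EuclideanSpace.single (r l) (1:ℝ))| :=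
        Finset.abs_sum_le_sum_abs _ _
  _ ≤ ∑ _r : Fin 3 → Fin d, B₁ * ‖v‖^3 := Finset.sum_le_sum (fun r _ => hterm r)
  _ = (d:ℝ)^3 * (B₁ * ‖v‖^3) := by
      rw [Finset.sum_const]
      simp [Fintype.card_fun]
  _ = B₁ * (d:ℝ)^3 * ‖v‖^3 := by ring

private lemma truncCauchy_nonneg (d : ℕ) (c₁ : ℝ) (hc₁ : 0 < c₁)
    (u : EuclideanSpace ℝ (Fin d)) : 0 ≤ truncCauchy d c₁ 1 u := by
  rw [truncCauchy]
  split
  · have hΓ1pos : 0 < Real.Gamma (((d : ℝ) + 1) / 2) := Real.Gamma_pos_of_pos (by positivity)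
    have hpepos : 0 < Real.pi ^ (((d : ℝ) + 1) / 2) := Real.rpow_pos_of_pos Real.pi_pos _
    positivity
  · exact le_refl 0

private lemma truncCauchy_indicator_le (d : ℕ) (c₁ : ℝ) (hc₁ : 0 < c₁)
    (u : EuclideanSpace ℝ (Fin d)) :
    truncCauchy d c₁ 1 u ≤ (Metric.closedBall (0 : EuclideanSpace ℝ (Fin d)) 1).indicator
      (fun _ => Real.Gamma (((d : ℝ) + 1) / 2) / (Real.pi ^ (((d : ℝ) + 1) / 2) * c₁)) u := by
  have hΓ1pos : 0 < Real.Gamma (((d : ℝ) + 1) / 2) := Real.Gamma_pos_of_pos (by positivity)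
  have hpepos : 0 < Real.pi ^ (((d : ℝ) + 1) / 2) := Real.rpow_pos_of_pos Real.pi_pos _
  set Γ1 := Real.Gamma (((d : ℝ) + 1) / 2)
  set pe := Real.pi ^ (((d : ℝ) + 1) / 2)
  rw [truncCauchy]
  by_cases hu : ‖u‖ ≤ 1
  · rw [if_pos hu, Set.indicator_of_mem (by simpa [Metric.mem_closedBall, dist_zero_right])]
    have h1 : (1 + ‖u‖ ^ 2 / (1:ℝ) ^ 2) ^ (-(((d : ℝ) + 1) / 2)) ≤ 1 :=
      Real.rpow_le_one_of_one_le_of_nonpos (le_add_of_nonneg_right (by positivity))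
        (neg_nonpos.mpr (by positivity))
    calc Γ1 / (pe * c₁ * (1:ℝ) ^ d) * (1 + ‖u‖ ^ 2 / (1:ℝ) ^ 2) ^ (-(((d : ℝ) + 1) / 2))
        ≤ Γ1 / (pe * c₁ * (1:ℝ) ^ d) * 1 := by
          apply mul_le_mul_of_nonneg_left h1 (by positivity)
    _ = Γ1 / (pe * c₁) := by rw [mul_one, one_pow, mul_one]
  · rw [if_neg hu]
    exact Set.indicator_nonneg (fun _ _ => by positivity) u

private lemma truncCauchy_integrable (d : ℕ) (c₁ : ℝ) (hc₁ : 0 < c₁) :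
    Integrable (truncCauchy d c₁ 1) := by
  have hmeas : Measurable (truncCauchy d c₁ 1) := by
    unfold truncCauchy
    refine Measurable.ite ?_ ?_ measurable_const
    · exact measurableSet_le measurable_norm measurable_const
    · apply Measurable.mul measurable_const
      apply Continuous.measurable
      apply Continuous.rpow_const
      · continuity
      · intro u
        left
        positivity
  have hindInt : Integrable ((Metric.closedBall (0 : EuclideanSpace ℝ (Fin d)) 1).indicator
      (fun _ => Real.Gamma (((d : ℝ) + 1) / 2) / (Real.pi ^ (((d : ℝ) + 1) / 2) * c₁))) := by
    rw [integrable_indicator_iff Metric.isClosed_closedBall.measurableSet]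
    exact integrableOn_const measure_closedBall_lt_top.ne
  apply Integrable.mono' hindInt hmeas.aestronglyMeasurable
  filter_upwards with u
  rw [Real.norm_eq_abs, abs_of_nonneg (truncCauchy_nonneg d c₁ hc₁ u)]
  exact truncCauchy_indicator_le d c₁ hc₁ u

/-- Since the truncated Cauchy density integrates to one, the constant `c₁₁` is at least `d`. -/
private lemma c11_ge_d (d : ℕ) (hd : 0 < d) (c₁ : ℝ) (hc₁ : 0 < c₁)
    (hnorm : ∫ u : EuclideanSpace ℝ (Fin d), truncCauchy d c₁ 1 u = 1)
    (c₁₁ : ℝ)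
    (hc₁₁ : c₁₁ = 2 * Real.Gamma (((d : ℝ) + 1) / 2) /
      (Real.sqrt Real.pi * Real.Gamma ((d : ℝ) / 2) * c₁)) :
    (d : ℝ) ≤ c₁₁ := by
  set E := EuclideanSpace ℝ (Fin d)
  set Γ1 := Real.Gamma (((d : ℝ) + 1) / 2) with hΓ1
  set Γ2 := Real.Gamma ((d : ℝ) / 2) with hΓ2
  set pe := Real.pi ^ (((d : ℝ) + 1) / 2) with hpe
  have hΓ1pos : 0 < Γ1 := Real.Gamma_pos_of_pos (by positivity)
  have hΓ2pos : 0 < Γ2 := Real.Gamma_pos_of_pos (by positivity)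
  have hpepos : 0 < pe := Real.rpow_pos_of_pos Real.pi_pos _
  have hΓ3 : Real.Gamma ((d : ℝ) / 2 + 1) = ((d : ℝ) / 2) * Γ2 :=
    Real.Gamma_add_one (by positivity)
  have hΓ3pos : 0 < Real.Gamma ((d : ℝ) / 2 + 1) := Real.Gamma_pos_of_pos (by positivity)
  set Vol := Real.sqrt Real.pi ^ d / Real.Gamma ((d : ℝ) / 2 + 1) with hVol
  have hVolpos : 0 < Vol := by positivity
  set K' := Γ1 / (pe * c₁) with hK'
  have hK'pos : 0 < K' := by positivity
  have hindInt : Integrable ((Metric.closedBall (0:E) 1).indicator (fun _ => K')) := by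
    rw [integrable_indicator_iff Metric.isClosed_closedBall.measurableSet]
    exact integrableOn_const measure_closedBall_lt_top.ne
  have hindval : ∫ u : E, (Metric.closedBall (0:E) 1).indicator (fun _ => K') u
      = Vol * K' := by
    haveI : Nonempty (Fin d) := ⟨⟨0, hd⟩⟩
    rw [integral_indicator Metric.isClosed_closedBall.measurableSet, setIntegral_const]
    rw [measureReal_def, EuclideanSpace.volume_closedBall]
    simp only [Fintype.card_fin, ENNReal.ofReal_one, one_pow, one_mul]
    rw [ENNReal.toReal_ofReal hVolpos.le]
    rw [smul_eq_mul]
  have hle1 : 1 ≤ Vol * K' := by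
    rw [← hnorm, ← hindval]
    exact integral_mono (truncCauchy_integrable d c₁ hc₁) hindInt
      (truncCauchy_indicator_le d c₁ hc₁)
  have hsq : Real.sqrt Real.pi ^ (d+1) = pe := by
    rw [Real.sqrt_eq_rpow, ← Real.rpow_natCast (Real.pi ^ ((1:ℝ)/2)) (d+1),
      ← Real.rpow_mul Real.pi_pos.le]
    rw [hpe]
    congr 1
    push_cast
    ring
  have hkey : (d:ℝ) * (Real.sqrt Real.pi * Γ2) * Vol = 2 * pe := by
    rw [hVol, hΓ3, ← hsq]
    have hd1 : (0:ℝ) < (d:ℝ) := by exact_mod_cast hd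
    field_simp
    ring
  have hc₁le : pe * c₁ ≤ Vol * Γ1 := by
    have h := mul_le_mul_of_nonneg_right hle1 (show (0:ℝ) ≤ pe * c₁ by positivity)
    rw [one_mul, hK'] at h
    calc pe*c₁ ≤ Vol * (Γ1/(pe*c₁)) * (pe*c₁) := h
    _ = Vol * Γ1 := by field_simp
  have hc₁le' : c₁ ≤ Vol*Γ1/pe := by
    rw [le_div_iff₀ hpepos]
    nlinarith [hc₁le]
  rw [hc₁₁, le_div_iff₀ (by positivity : (0:ℝ) < Real.sqrt Real.pi * Γ2 * c₁)]
  calc (d:ℝ) * (Real.sqrt Real.pi * Γ2 * c₁) = ((d:ℝ)*(Real.sqrt Real.pi*Γ2))*c₁ := by ring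
  _ ≤ ((d:ℝ)*(Real.sqrt Real.pi*Γ2))*(Vol*Γ1/pe) :=
      mul_le_mul_of_nonneg_left hc₁le' (by positivity)
  _ = ((d:ℝ)*(Real.sqrt Real.pi*Γ2)*Vol)*(Γ1/pe) := by ring
  _ = (2*pe)*(Γ1/pe) := by rw [hkey]
  _ = 2*Γ1 := by field_simp

set_option maxHeartbeats 2000000 in
/-- Bounds on the balanced smoothed gradient:
`‖∇f_δ(x)‖ ≤ c₁₁‖∇f(x)‖ + d·c₂″·δ²` and
`‖∇f_δ(x)‖² ≤ 2c₁₁²‖∇f(x)‖² + 2d²δ⁴c₂″²`, with `c₂″ = B₁d⁴/3`. -/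
theorem balanced_smoothed_gradient_bound
    (d : ℕ) (hd : 0 < d) (c₁ : ℝ) (hc₁ : 0 < c₁)
    (hnorm : ∫ u : EuclideanSpace ℝ (Fin d), truncCauchy d c₁ 1 u = 1)
    (f : EuclideanSpace ℝ (Fin d) → ℝ) (B₁ : ℝ)
    (hf : ContDiff ℝ 3 f)
    (h3 : ∀ (y : EuclideanSpace ℝ (Fin d)) (i j k : Fin d),
      |iteratedFDeriv ℝ 3 f y
        ![EuclideanSpace.single i 1, EuclideanSpace.single j 1, EuclideanSpace.single k 1]| ≤ B₁)
    (c₁₁ c₂'' : ℝ)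
    (hc₁₁ : c₁₁ = 2 * Real.Gamma (((d : ℝ) + 1) / 2) /
      (Real.sqrt Real.pi * Real.Gamma ((d : ℝ) / 2) * c₁))
    (hc₂'' : c₂'' = B₁ * (d : ℝ) ^ 4 / 3)
    (δ : ℝ) (hδ : 0 < δ) (x : EuclideanSpace ℝ (Fin d))
    (gradfδ : EuclideanSpace ℝ (Fin d))
    (hgradfδ : gradfδ = (2 * δ)⁻¹ • ∫ u : EuclideanSpace ℝ (Fin d),
      (truncCauchy d c₁ 1 u *
        ((f (x + δ • u) - f (x - δ • u)) * (((d : ℝ) + 1) / (1 + ‖u‖ ^ 2)))) • u) :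
    ‖gradfδ‖ ≤ c₁₁ * ‖gradient f x‖ + (d : ℝ) * c₂'' * δ ^ 2 ∧
    ‖gradfδ‖ ^ 2 ≤ 2 * c₁₁ ^ 2 * ‖gradient f x‖ ^ 2 + 2 * (d : ℝ) ^ 2 * δ ^ 4 * c₂'' ^ 2 := by
  have hd1 : (1:ℝ) ≤ (d:ℝ) := by exact_mod_cast hd
  have hB₁ : 0 ≤ B₁ := (abs_nonneg _).trans (h3 x ⟨0, hd⟩ ⟨0, hd⟩ ⟨0, hd⟩)
  have hcd : (d:ℝ) ≤ c₁₁ := c11_ge_d d hd c₁ hc₁ hnorm c₁₁ hc₁₁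
  set g := gradient f x with hg
  set M := 2*δ*‖g‖ + B₁*(d:ℝ)^3/3*δ^3 with hM
  have hMnn : 0 ≤ M := by positivity
  set C := ((d:ℝ)+1)/2 * M with hC
  have hCnn : 0 ≤ C := by positivity
  -- pointwise bound
  have hpt : ∀ u : EuclideanSpace ℝ (Fin d),
      ‖(truncCauchy d c₁ 1 u *
        ((f (x + δ • u) - f (x - δ • u)) * (((d : ℝ) + 1) / (1 + ‖u‖ ^ 2)))) • u‖
      ≤ C * truncCauchy d c₁ 1 u := by
    intro u
    by_cases hu : ‖u‖ ≤ 1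
    · have htnn := truncCauchy_nonneg d c₁ hc₁ u
      have hwpos : 0 < ((d:ℝ)+1)/(1+‖u‖^2) := by positivity
      set v := δ • u with hv
      have hvn : ‖v‖ = δ * ‖u‖ := by rw [hv, norm_smul, Real.norm_eq_abs, abs_of_pos hδ]
      have hA : ∀ y : EuclideanSpace ℝ (Fin d),
          |iteratedFDeriv ℝ 3 f y (fun _ => v)| ≤ B₁*(d:ℝ)^3*‖v‖^3 := fun y =>
        third_deriv_diag_bound d f B₁ h3 y v
      have hT := symm_taylor f hf x v _ hA
      have hfd : fderiv ℝ f x v = inner ℝ g v := by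
        rw [hg, gradient, ← InnerProductSpace.toDual_apply_apply, LinearIsometryEquiv.apply_symm_apply]
      have hgrad : |fderiv ℝ f x v| ≤ ‖g‖ * ‖v‖ := by
        rw [hfd]
        exact abs_real_inner_le_norm g v
      have hu3 : ‖u‖^3 ≤ ‖u‖ := by
        calc ‖u‖^3 = ‖u‖ * ‖u‖^2 := by ring
        _ ≤ ‖u‖ * 1 := by nlinarith [norm_nonneg u]
        _ = ‖u‖ := mul_one _
      have hΔ : |f (x + v) - f (x - v)| ≤ M * ‖u‖ := by
        have h1 : |f (x + v) - f (x - v)| ≤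
            |f (x + v) - f (x - v) - 2 * (fderiv ℝ f x v)| + 2 * |fderiv ℝ f x v| := by
          have := abs_add_le (f (x + v) - f (x - v) - 2 * (fderiv ℝ f x v)) (2 * (fderiv ℝ f x v))
          simp only [sub_add_cancel] at this
          calc |f (x + v) - f (x - v)| ≤
              |f (x + v) - f (x - v) - 2 * (fderiv ℝ f x v)| + |2 * (fderiv ℝ f x v)| := this
          _ = _ := by rw [abs_mul, abs_two]
        have h2 : B₁*(d:ℝ)^3*‖v‖^3/3 + 2*(‖g‖*‖v‖) ≤ M * ‖u‖ := by
          rw [hvn, hM]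
          have : (δ*‖u‖)^3 = δ^3 * ‖u‖^3 := by ring
          rw [this]
          have h4 : B₁*(d:ℝ)^3*(δ^3*‖u‖^3)/3 ≤ B₁*(d:ℝ)^3/3*δ^3*‖u‖ := by
            have := mul_le_mul_of_nonneg_left hu3 (show 0 ≤ B₁*(d:ℝ)^3/3*δ^3 by positivity)
            nlinarith [this]
          nlinarith [h4]
        calc |f (x + v) - f (x - v)| ≤
            |f (x + v) - f (x - v) - 2 * (fderiv ℝ f x v)| + 2 * |fderiv ℝ f x v| := h1
        _ ≤ B₁*(d:ℝ)^3*‖v‖^3/3 + 2*(‖g‖*‖v‖) := by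
            linarith [hT, hgrad]
        _ ≤ M * ‖u‖ := h2
      -- assemble
      have hnorm_eq : ‖(truncCauchy d c₁ 1 u *
          ((f (x + δ • u) - f (x - δ • u)) * (((d : ℝ) + 1) / (1 + ‖u‖ ^ 2)))) • u‖
          = truncCauchy d c₁ 1 u * |f (x + v) - f (x - v)| *
            (((d : ℝ) + 1) / (1 + ‖u‖ ^ 2)) * ‖u‖ := by
        rw [norm_smul, Real.norm_eq_abs, abs_mul, abs_of_nonneg htnn, abs_mul,
          abs_of_pos hwpos, hv]
        ring
      rw [hnorm_eq]
      have hw2 : (((d:ℝ)+1)/(1+‖u‖^2)) * ‖u‖^2 ≤ ((d:ℝ)+1)/2 := by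
        rw [div_mul_eq_mul_div, div_le_div_iff₀ (by positivity) (by norm_num)]
        have husq : ‖u‖^2 ≤ 1 := by nlinarith [norm_nonneg u, hu]
        have hdn : (0:ℝ) ≤ (d:ℝ)+1 := by positivity
        nlinarith [mul_nonneg hdn (sub_nonneg.mpr husq)]
      calc truncCauchy d c₁ 1 u * |f (x + v) - f (x - v)| * (((d : ℝ) + 1) / (1 + ‖u‖ ^ 2)) * ‖u‖
          ≤ truncCauchy d c₁ 1 u * (M * ‖u‖) * (((d : ℝ) + 1) / (1 + ‖u‖ ^ 2)) * ‖u‖ := by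
            apply mul_le_mul_of_nonneg_right _ (norm_nonneg u)
            apply mul_le_mul_of_nonneg_right _ hwpos.le
            exact mul_le_mul_of_nonneg_left hΔ htnn
      _ = truncCauchy d c₁ 1 u * M * ((((d : ℝ) + 1) / (1 + ‖u‖ ^ 2)) * ‖u‖^2) := by ring
      _ ≤ truncCauchy d c₁ 1 u * M * (((d:ℝ)+1)/2) :=
            mul_le_mul_of_nonneg_left hw2 (by positivity)
      _ = C * truncCauchy d c₁ 1 u := by rw [hC]; ring
    · have h0 : truncCauchy d c₁ 1 u = 0 := by rw [truncCauchy, if_neg hu]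
      rw [h0]
      simp
  -- integral bound
  have hbound : ‖gradfδ‖ ≤ (2*δ)⁻¹ * C := by
    rw [hgradfδ, norm_smul, Real.norm_eq_abs, abs_of_pos (by positivity)]
    apply mul_le_mul_of_nonneg_left _ (by positivity)
    calc ‖∫ u : EuclideanSpace ℝ (Fin d),
          (truncCauchy d c₁ 1 u *
            ((f (x + δ • u) - f (x - δ • u)) * (((d : ℝ) + 1) / (1 + ‖u‖ ^ 2)))) • u‖
        ≤ ∫ u : EuclideanSpace ℝ (Fin d), ‖(truncCauchy d c₁ 1 u *
            ((f (x + δ • u) - f (x - δ • u)) * (((d : ℝ) + 1) / (1 + ‖u‖ ^ 2)))) • u‖ :=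
          norm_integral_le_integral_norm _
    _ ≤ ∫ u : EuclideanSpace ℝ (Fin d), C * truncCauchy d c₁ 1 u :=
          integral_mono_of_nonneg (Filter.Eventually.of_forall fun u => norm_nonneg _)
            ((truncCauchy_integrable d c₁ hc₁).const_mul C)
            (Filter.Eventually.of_forall hpt)
    _ = C * ∫ u : EuclideanSpace ℝ (Fin d), truncCauchy d c₁ 1 u := integral_const_mul C _
    _ = C := by rw [hnorm, mul_one]
  have main1 : ‖gradfδ‖ ≤ c₁₁ * ‖g‖ + (d : ℝ) * c₂'' * δ ^ 2 := by
    have hCval : (2*δ)⁻¹ * C = ((d:ℝ)+1)/2*‖g‖ + ((d:ℝ)+1)*B₁*(d:ℝ)^3*δ^2/12 := by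
      rw [hC, hM]
      field_simp
      ring
    refine hbound.trans ?_
    rw [hCval, hc₂'']
    have hpoly : 0 ≤ 4*(d:ℝ)^2 - (d:ℝ) - 1 := by nlinarith [hd1]
    have hgnn : 0 ≤ ‖g‖ := norm_nonneg g
    have hint1 : 0 ≤ (c₁₁ - ((d:ℝ)+1)/2) * ‖g‖ :=
      mul_nonneg (by linarith [hcd, hd1]) hgnn
    have hint2 : 0 ≤ B₁ * δ^2 * ((d:ℝ)^3 * (4*(d:ℝ)^2 - (d:ℝ) - 1)) :=
      mul_nonneg (mul_nonneg hB₁ (sq_nonneg δ)) (mul_nonneg (by positivity) hpoly)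
    nlinarith [hint1, hint2]
  constructor
  · exact main1
  · have hrhs1 : 0 ≤ c₁₁ * ‖g‖ := mul_nonneg (by linarith [hcd, hd1]) (norm_nonneg g)
    have hrhs2 : 0 ≤ (d:ℝ) * c₂'' * δ^2 := by
      rw [hc₂'']
      positivity
    nlinarith [main1, norm_nonneg gradfδ, sq_nonneg (c₁₁ * ‖g‖ - (d:ℝ) * c₂'' * δ^2),
      hrhs1, hrhs2]
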